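/- Let u₁^± and u_k^± (k ≥ 2) be the transverse eigenfunctions defined by u_k^±(t) = (1/2)cos(kπ(t+1)/4)(1,1)ᵀ ± (1/2)sin(kπ(t+1)/4)(1,−1)ᵀ. Then a_k := ∫_{−1}^{1}⟨σ₃u_k^+(t), u₁^+(t)⟩ dt = (4/π)·sin²(π(k+1)/4)/(k+1) and b_k := ∫_{−1}^{1}⟨σ₃u_k^+(t), u₁^−(t)⟩ dt = (4/π)·sin²(π(k−1)/4)/(k−1). In particular Σ_{k≥2} a_k² < ∞. -/

import Mathlib

open Real MeasureTheory
open scoped ComplexInnerProductSpace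

noncomputable section

abbrev E2 : Type := EuclideanSpace ℂ (Fin 2)

def vec2 (a b : ℂ) : E2 := WithLp.toLp 2 ![a, b]

/-- The Pauli matrix `σ₃ = [[1,0],[0,−1]]` acting on `ℂ²`. -/
def sigma3 (v : E2) : E2 := vec2 (v 0) (-(v 1))

/-- The transverse eigenfunctions `u_k^±`. -/
def ukp (k : ℕ) : ℝ → E2 := fun t =>
  vec2 (((1/2) * (Real.cos ((k : ℝ) * π * (t + 1) / 4) +
            Real.sin ((k : ℝ) * π * (t + 1) / 4)) : ℝ))
       (((1/2) * (Real.cos ((k : ℝ) * π * (t + 1) / 4) -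
            Real.sin ((k : ℝ) * π * (t + 1) / 4)) : ℝ))

def ukm (k : ℕ) : ℝ → E2 := fun t =>
  vec2 (((1/2) * (Real.cos ((k : ℝ) * π * (t + 1) / 4) -
            Real.sin ((k : ℝ) * π * (t + 1) / 4)) : ℝ))
       (((1/2) * (Real.cos ((k : ℝ) * π * (t + 1) / 4) +
            Real.sin ((k : ℝ) * π * (t + 1) / 4)) : ℝ))

/-- `a_k = (4/π)·sin²(π(k+1)/4)/(k+1)`. -/
def acoeff (k : ℕ) : ℝ := (4 / π) * Real.sin (π * ((k : ℝ) + 1) / 4)^2 / ((k : ℝ) + 1)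

/-- `b_k = (4/π)·sin²(π(k−1)/4)/(k−1)`. -/
def bcoeff (k : ℕ) : ℝ := (4 / π) * Real.sin (π * ((k : ℝ) - 1) / 4)^2 / ((k : ℝ) - 1)

/-- pointwise value of the first inner product -/
lemma ptA (k : ℕ) (t : ℝ) :
    ⟪sigma3 (ukp k t), ukp 1 t⟫ =
      (((1/2) * Real.sin ((((k:ℝ)+1) * π * (t+1)) / 4) : ℝ) : ℂ) := by
  simp only [sigma3, ukp, vec2, PiLp.toLp_apply, PiLp.inner_apply, Fin.sum_univ_two, RCLike.inner_apply,
    Matrix.cons_val_zero, Matrix.cons_val_one, Matrix.head_cons, map_neg,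
    Complex.conj_ofReal, Nat.cast_one, one_mul]
  push_cast
  rw [show ((k:ℂ)+1)*(π:ℂ)*((t:ℂ)+1)/4 = (k:ℂ)*(π:ℂ)*((t:ℂ)+1)/4 + (π:ℂ)*((t:ℂ)+1)/4 by ring,
    Complex.sin_add]
  ring

/-- pointwise value of the second inner product -/
lemma ptB (k : ℕ) (t : ℝ) :
    ⟪sigma3 (ukp k t), ukm 1 t⟫ =
      (((1/2) * Real.sin ((((k:ℝ)-1) * π * (t+1)) / 4) : ℝ) : ℂ) := by
  simp only [sigma3, ukp, ukm, vec2, PiLp.toLp_apply, PiLp.inner_apply, Fin.sum_univ_two, RCLike.inner_apply,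
    Matrix.cons_val_zero, Matrix.cons_val_one, Matrix.head_cons, map_neg,
    Complex.conj_ofReal, Nat.cast_one, one_mul]
  push_cast
  rw [show ((k:ℂ)-1)*(π:ℂ)*((t:ℂ)+1)/4 = (k:ℂ)*(π:ℂ)*((t:ℂ)+1)/4 - (π:ℂ)*((t:ℂ)+1)/4 by ring,
    Complex.sin_sub]
  ring

lemma integral_sin_aux (α : ℝ) (hα : α ≠ 0) :
    ∫ t in (-1:ℝ)..1, Real.sin (α*(t+1)) = 2 * Real.sin α ^ 2 / α := by
  have hd : ∀ t ∈ Set.uIcc (-1:ℝ) 1,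
      HasDerivAt (fun t => -Real.cos (α*(t+1)) / α) (Real.sin (α*(t+1))) t := by
    intro t _
    have h1 : HasDerivAt (fun t : ℝ => α*(t+1)) α t := by
      simpa using ((hasDerivAt_id t).add_const 1).const_mul α
    have h2 := (Real.hasDerivAt_cos (α*(t+1))).comp t h1
    have h3 := (h2.neg).div_const α
    simpa [mul_comm, mul_div_assoc, hα] using h3
  rw [intervalIntegral.integral_eq_sub_of_hasDerivAt hd
    ((Continuous.intervalIntegrable (by continuity) (-1) 1) :
      IntervalIntegrable (fun t => Real.sin (α*(t+1))) volume (-1) 1)]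
  have hs : Real.sin α ^ 2 = 1/2 - Real.cos (2*α)/2 := by
    nlinarith [Real.cos_two_mul α, Real.sin_sq_add_cos_sq α]
  rw [show α*((1:ℝ)+1) = 2*α by ring, show α*((-1:ℝ)+1) = 0 by ring]
  rw [Real.cos_zero]
  field_simp
  nlinarith [hs]

/-- `∫_{-1}^1 (1/2) sin(c·π·(t+1)/4) dt = (4/π) sin²(πc/4)/c` for `c ≠ 0`. -/
lemma main_integral (c : ℝ) (hc : c ≠ 0) :
    ∫ t in (-1:ℝ)..1, (1/2) * Real.sin ((c * π * (t+1)) / 4) =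
      (4 / π) * Real.sin (π * c / 4)^2 / c := by
  have hπ : π ≠ 0 := Real.pi_ne_zero
  have hα : c * π / 4 ≠ 0 := by
    simp [hc, hπ]
  calc ∫ t in (-1:ℝ)..1, (1/2) * Real.sin ((c * π * (t+1)) / 4)
      = (1/2) * ∫ t in (-1:ℝ)..1, Real.sin ((c * π / 4) * (t+1)) := by
        rw [← intervalIntegral.integral_const_mul]
        congr 1; ext t; ring_nf
    _ = (1/2) * (2 * Real.sin (c * π / 4) ^ 2 / (c * π / 4)) := by
        rw [integral_sin_aux _ hα]
    _ = (4 / π) * Real.sin (π * c / 4)^2 / c := by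
        rw [show c * π / 4 = π * c / 4 by ring]
        field_simp

/-- For `k ≥ 2`:
`∫_{−1}^1 ⟨σ₃u_k^+(t), u₁^+(t)⟩ dt = a_k` and
`∫_{−1}^1 ⟨σ₃u_k^+(t), u₁^−(t)⟩ dt = b_k`, and `Σ_{k} a_k² < ∞`. -/
theorem offdiagonal_matrix_elements :
    (∀ k : ℕ, 2 ≤ k →
      (∫ t in (-1 : ℝ)..1, ⟪sigma3 (ukp k t), ukp 1 t⟫) = ((acoeff k : ℝ) : ℂ)) ∧
    (∀ k : ℕ, 2 ≤ k →
      (∫ t in (-1 : ℝ)..1, ⟪sigma3 (ukp k t), ukm 1 t⟫) = ((bcoeff k : ℝ) : ℂ)) ∧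
    Summable (fun k : ℕ => (acoeff k)^2) := by
  refine ⟨?_, ?_, ?_⟩
  · intro k hk
    have hc : ((k:ℝ) + 1) ≠ 0 := by positivity
    simp only [ptA]
    rw [intervalIntegral.integral_ofReal, main_integral _ hc, acoeff]
  · intro k hk
    have hc : ((k:ℝ) - 1) ≠ 0 := by
      have : (2:ℝ) ≤ (k:ℝ) := by exact_mod_cast hk
      linarith
    simp only [ptB]
    rw [intervalIntegral.integral_ofReal, main_integral _ hc, bcoeff]
  · have hπ : (0:ℝ) < π := Real.pi_pos
    have hbase : Summable (fun k : ℕ => (4/π)^2 * (1/((k:ℝ)+1)^2)) := by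
      apply Summable.mul_left
      have h1 : Summable (fun n : ℕ => 1/((n:ℝ))^2) := by
        simpa using Real.summable_one_div_nat_pow.mpr (by norm_num : 1 < 2)
      have := (summable_nat_add_iff 1).mpr h1
      simpa [Nat.cast_add] using this
    apply Summable.of_nonneg_of_le (fun k => sq_nonneg _) _ hbase
    intro k
    have hs : Real.sin (π * ((k:ℝ)+1) / 4)^2 ≤ 1 := Real.sin_sq_le_one _
    have h0 : (0:ℝ) ≤ Real.sin (π * ((k:ℝ)+1) / 4)^2 := sq_nonneg _
    calc (acoeff k)^2
        = (4/π)^2 * ((Real.sin (π * ((k:ℝ)+1) / 4)^2)^2 / ((k:ℝ)+1)^2) := by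
          rw [acoeff, div_pow, mul_pow, mul_div_assoc]
      _ ≤ (4/π)^2 * (1 / ((k:ℝ)+1)^2) := by
          gcongr
          nlinarith [hs, h0]
  done
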